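/- arXiv:1310.0120 — 7 statements merged into one kernel-verified Lean document; each statement's English description precedes it below -/
import Mathlib

section
/- For every prime p and all non-negative integers λ, μ < p with λ + μ ≥ 1, there exists a (λ,μ;p)-covering set S ⊆ Z_p with #S ≤ 2·⌈p / max{λ,μ}⌉ − 1. -/
/-- `S ⊆ Z_q` is a `(lam, mu; q)`-covering set: every residue class `a` modulo `q`
can be written as `m * s` with `m ∈ {-mu, …, lam} \ {0}` and `s ∈ S`. -/
def IsCoveringSet (q lam mu : ℕ) (S : Finset (ZMod q)) : Prop :=
  ∀ a : ZMod q, ∃ m : ℤ, -(mu : ℤ) ≤ m ∧ m ≤ (lam : ℤ) ∧ m ≠ 0 ∧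
    ∃ s ∈ S, (m : ZMod q) * s = a

/-- Pigeonhole key lemma: every nonzero `a : ZMod p` can be written as
`m * r⁻¹` with `1 ≤ m ≤ k` and `|r| < n`, provided `p ≤ n * k`. -/
lemma key_lemma (p : ℕ) [Fact p.Prime] (k n : ℕ) (hk : 0 < k) (hkp : k < p)
    (hn : 0 < n) (hpnk : p ≤ n * k) (a : ZMod p) (ha : a ≠ 0) :
    ∃ m : ℤ, 1 ≤ m ∧ m ≤ (k : ℤ) ∧ ∃ r : ℤ, -(n : ℤ) < r ∧ r < n ∧
      a = (m : ZMod p) * ((r : ZMod p))⁻¹ := by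
  set b := a⁻¹ with hb
  have hb0 : b ≠ 0 := inv_ne_zero ha
  have hmap : ∀ i ∈ Finset.range (k + 1),
      ((i : ZMod p) * b).val / n ∈ Finset.range k := by
    intro i _
    simp only [Finset.mem_range]
    have hv : ((i : ZMod p) * b).val < p := ZMod.val_lt _
    exact Nat.div_lt_of_lt_mul (by omega)
  obtain ⟨i, hi, j, hj, hij, hfe⟩ :=
    Finset.exists_ne_map_eq_of_card_lt_of_maps_to (by simp) hmap
  simp only [Finset.mem_range] at hi hj
  -- key sub-claim, symmetric in i and j
  have main : ∀ i j : ℕ, i < k + 1 → j < k + 1 → i < j →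
      ((i : ZMod p) * b).val / n = ((j : ZMod p) * b).val / n →
      ∃ m : ℤ, 1 ≤ m ∧ m ≤ (k : ℤ) ∧ ∃ r : ℤ, -(n : ℤ) < r ∧ r < n ∧
        a = (m : ZMod p) * ((r : ZMod p))⁻¹ := by
    intro i j hi hj hlt hfe
    set vi := ((i : ZMod p) * b).val with hvi
    set vj := ((j : ZMod p) * b).val with hvj
    have h1 : vi % n + n * (vi / n) = vi := Nat.mod_add_div vi n
    have h2 : vj % n + n * (vj / n) = vj := Nat.mod_add_div vj n
    rw [← hfe] at h2
    have h3 : vi % n < n := Nat.mod_lt _ hn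
    have h4 : vj % n < n := Nat.mod_lt _ hn
    set w := n * (vi / n) with hw
    set m : ℤ := (j : ℤ) - (i : ℤ) with hm
    set r : ℤ := (vj : ℤ) - (vi : ℤ) with hr
    have hmne : ((m : ℤ) : ZMod p) ≠ 0 := by
      have hji : (j : ZMod p) ≠ (i : ZMod p) := by
        intro hc
        have hji' : j = i := by
          have := congrArg ZMod.val hc
          rwa [ZMod.val_cast_of_lt (by omega), ZMod.val_cast_of_lt (by omega)] at this
        omega
      rw [hm]
      push_cast
      exact sub_ne_zero.mpr hji
    have hcast : ((r : ℤ) : ZMod p) = ((m : ℤ) : ZMod p) * b := by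
      rw [hr, hm]
      push_cast
      rw [hvi, hvj]
      simp only [ZMod.natCast_val, ZMod.cast_id]
      ring
    have hrne : ((r : ℤ) : ZMod p) ≠ 0 := by
      rw [hcast]; exact mul_ne_zero hmne hb0
    refine ⟨m, by omega, by omega, r, by omega, by omega, ?_⟩
    have : ((m : ℤ) : ZMod p) = ((r : ℤ) : ZMod p) * a := by
      rw [hcast, hb]
      field_simp
    rw [this]
    field_simp
  rcases lt_or_gt_of_ne hij with hlt | hgt
  · exact main i j hi hj hlt hfe
  · exact main j i hj hi hgt hfe.symm

theorem stmt1 (p : ℕ) (hp : p.Prime) (lam mu : ℕ) (hlam : lam < p) (hmu : mu < p)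
    (h : 1 ≤ lam + mu) :
    ∃ S : Finset (ZMod p), IsCoveringSet p lam mu S ∧
      S.card ≤ 2 * ⌈(p : ℚ) / (max lam mu : ℚ)⌉₊ - 1 := by
  haveI := Fact.mk hp
  set k := max lam mu with hkdef
  have hk : 0 < k := by omega
  have hkp : k < p := by omega
  set n := ⌈(p : ℚ) / (k : ℚ)⌉₊ with hndef
  have hkQ : (0 : ℚ) < (k : ℚ) := by exact_mod_cast hk
  have hn : 0 < n := by
    rw [hndef, Nat.ceil_pos]
    have hpQ : (0 : ℚ) < (p : ℚ) := by exact_mod_cast hp.pos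
    exact div_pos hpQ hkQ
  have hpnk : p ≤ n * k := by
    have h1 : (p : ℚ) / (k : ℚ) ≤ (n : ℚ) := Nat.le_ceil _
    have h2 : (p : ℚ) ≤ (n : ℚ) * (k : ℚ) := by
      rwa [div_le_iff₀ hkQ] at h1
    exact_mod_cast h2
  refine ⟨(Finset.Ioo (-(n : ℤ)) (n : ℤ)).image (fun r : ℤ => ((r : ZMod p))⁻¹), ?_, ?_⟩
  · intro a
    by_cases ha : a = 0
    · -- use s = 0
      have h0 : (0 : ZMod p) ∈
          (Finset.Ioo (-(n : ℤ)) (n : ℤ)).image (fun r : ℤ => ((r : ZMod p))⁻¹) := by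
        refine Finset.mem_image.mpr ⟨0, by simp; omega, by simp⟩
      rcases Nat.lt_or_ge 0 lam with hl | hl
      · exact ⟨1, by omega, by omega, by omega, 0, h0, by simp [ha]⟩
      · exact ⟨-1, by omega, by omega, by omega, 0, h0, by simp [ha]⟩
    · obtain ⟨m, hm1, hmk, r, hr1, hr2, heq⟩ :=
        key_lemma p k n hk hkp hn hpnk a ha
      rcases le_or_gt mu lam with hcase | hcase
      · -- lam = k, use m as-is
        have hlamk : k = lam := max_eq_left hcase
        refine ⟨m, by omega, by omega, by omega,
          ((r : ZMod p))⁻¹, ?_, heq.symm⟩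
        exact Finset.mem_image.mpr ⟨r, Finset.mem_Ioo.mpr ⟨hr1, hr2⟩, rfl⟩
      · -- mu = k, use -m and -r
        have hmuk : k = mu := max_eq_right (le_of_lt hcase)
        refine ⟨-m, by omega, by omega, by omega,
          (((-r : ℤ) : ZMod p))⁻¹, ?_, ?_⟩
        · exact Finset.mem_image.mpr ⟨-r, Finset.mem_Ioo.mpr ⟨by omega, by omega⟩, rfl⟩
        · push_cast
          rw [inv_neg, heq]
          ring
  · calc ((Finset.Ioo (-(n : ℤ)) (n : ℤ)).image (fun r : ℤ => ((r : ZMod p))⁻¹)).card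
        ≤ (Finset.Ioo (-(n : ℤ)) (n : ℤ)).card := Finset.card_image_le
      _ ≤ 2 * n - 1 := by
          rw [Int.card_Ioo]
          omega
      _ ≤ 2 * ⌈(p : ℚ) / (max (lam:ℚ) (mu:ℚ))⌉₊ - 1 := by
          rw [hndef, hkdef, Nat.cast_max]
end

section
/- Let p be a prime, ℓ ≥ 2 an integer, and suppose p^j ≤ λ < p^{j+1} for some integer j with 1 ≤ j < ℓ and λ < p^ℓ. Then the set S = {s_0 + s_1·p^j : s_0 ∈ {p^i : i = 0, …, j−1} ∪ {0}, 0 ≤ s_1 < p^{ℓ−j}} is a (λ,0;p^ℓ)-covering set of Z_{p^ℓ} of cardinality (j+1)·p^{ℓ−j}, and (j+1)·p^{ℓ−j} < (j+1)·p^ℓ/λ^{1/2}. -/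
theorem stmt7 (p : ℕ) (hp : p.Prime) (ℓ j lam : ℕ) (hℓ : 2 ≤ ℓ)
    (hj1 : 1 ≤ j) (hj2 : j < ℓ) (h1 : p ^ j ≤ lam) (h2 : lam < p ^ (j + 1))
    (h3 : lam < p ^ ℓ) :
    IsCoveringSet (p ^ ℓ) lam 0
      ((((Finset.range j).image (fun i => p ^ i) ∪ {0}) ×ˢ
          Finset.range (p ^ (ℓ - j))).image
        (fun x => ((x.1 + x.2 * p ^ j : ℕ) : ZMod (p ^ ℓ)))) ∧
    ((((Finset.range j).image (fun i => p ^ i) ∪ {0}) ×ˢ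
          Finset.range (p ^ (ℓ - j))).image
        (fun x => ((x.1 + x.2 * p ^ j : ℕ) : ZMod (p ^ ℓ)))).card
      = (j + 1) * p ^ (ℓ - j) ∧
    ((j + 1) * p ^ (ℓ - j) : ℝ) < (j + 1) * (p : ℝ) ^ ℓ / Real.sqrt lam := by
  have hp2 : 2 ≤ p := hp.two_le
  have hp0 : 0 < p := hp.pos
  have hq : 0 < p ^ ℓ := pow_pos hp0 ℓ
  haveI : NeZero (p ^ ℓ) := ⟨hq.ne'⟩
  have hM0 : 0 < p ^ (ℓ - j) := pow_pos hp0 _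
  haveI : NeZero (p ^ (ℓ - j)) := ⟨hM0.ne'⟩
  have hMj : p ^ (ℓ - j) * p ^ j = p ^ ℓ := by
    rw [← pow_add, Nat.sub_add_cancel hj2.le]
  have hlam1 : 1 ≤ lam := le_trans (Nat.one_le_two_pow.trans (Nat.pow_le_pow_left hp2 j)) h1
  -- bound on first coordinates
  have hbd : ∀ z : ℕ, z ∈ ((Finset.range j).image (fun i => p ^ i) ∪ {0}) → z < p ^ j := by
    intro z hz
    simp only [Finset.mem_union, Finset.mem_image, Finset.mem_range,
      Finset.mem_singleton] at hz
    rcases hz with ⟨i, hi, rfl⟩ | rfl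
    · exact Nat.pow_lt_pow_right hp2 hi
    · exact pow_pos hp0 j
  constructor
  · -- covering
    intro a
    rcases eq_or_ne a 0 with rfl | ha
    · refine ⟨1, by norm_num, by exact_mod_cast hlam1, one_ne_zero,
        ((0 + 0 * p ^ j : ℕ) : ZMod (p ^ ℓ)), ?_, by push_cast; ring⟩
      exact Finset.mem_image.mpr ⟨(0, 0), by simp [hM0], rfl⟩
    · set n := a.val with hn
      have hn0 : n ≠ 0 := fun h => ha (by rwa [← ZMod.val_eq_zero])
      have hnlt : n < p ^ ℓ := a.val_lt
      have hna : ((n : ℕ) : ZMod (p ^ ℓ)) = a := ZMod.natCast_rightInverse a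
      set v := n.factorization p with hv
      have hvd : p ^ v ∣ n := Nat.ordProj_dvd n p
      have hcop : Nat.Coprime p (n / p ^ v) := Nat.coprime_ordCompl hp hn0
      set u := n / p ^ v with hudef
      have hun : p ^ v * u = n := Nat.mul_div_cancel' hvd
      have hvℓ : v < ℓ := by
        have : p ^ v ≤ n := Nat.le_of_dvd (Nat.pos_of_ne_zero hn0) hvd
        exact (Nat.pow_lt_pow_iff_right hp2).mp (lt_of_le_of_lt this hnlt)
      by_cases hjv : j ≤ v
      · -- n divisible by p^j
        have hjd : p ^ j ∣ n := dvd_trans (pow_dvd_pow p hjv) hvd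
        have hs1 : n / p ^ j * p ^ j = n := Nat.div_mul_cancel hjd
        have hs1lt : n / p ^ j < p ^ (ℓ - j) :=
          Nat.div_lt_of_lt_mul (by rw [mul_comm, hMj]; exact hnlt)
        refine ⟨1, by norm_num, by exact_mod_cast hlam1, one_ne_zero,
          ((0 + (n / p ^ j) * p ^ j : ℕ) : ZMod (p ^ ℓ)), ?_, ?_⟩
        · exact Finset.mem_image.mpr ⟨(0, n / p ^ j), by simp [hs1lt], rfl⟩
        · rw [Int.cast_one, one_mul, Nat.zero_add, hs1, hna]
      · push_neg at hjv
        set d := j - v with hd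
        have hd1 : 1 ≤ d := Nat.le_sub_of_add_le (by omega)
        have hvd' : v + d = j := by omega
        set m := u % p ^ d with hm
        set t := u / p ^ d with ht
        have hut : p ^ d * t + m = u := Nat.div_add_mod u (p ^ d)
        have hpu : ¬ p ∣ u := (Nat.Prime.coprime_iff_not_dvd hp).mp hcop
        have hpm : ¬ p ∣ m := by
          intro hdvd
          apply hpu
          have h7 : p ∣ p ^ d * t := Dvd.dvd.mul_right (dvd_pow_self p (by omega)) t
          rw [← hut]
          exact Nat.dvd_add h7 hdvd
        have hm0 : m ≠ 0 := by
          intro h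
          exact hpm (h ▸ dvd_zero p)
        have hmlt : m < p ^ d := Nat.mod_lt u (pow_pos hp0 d)
        have hmlam : m ≤ lam := le_trans (le_trans hmlt.le
          (Nat.pow_le_pow_right hp0 (by omega))) h1
        have hmcop : Nat.Coprime m (p ^ (ℓ - j)) :=
          Nat.Coprime.pow_right _ ((hp.coprime_iff_not_dvd.mpr hpm).symm)
        have hunit : IsUnit ((m : ZMod (p ^ (ℓ - j)))) :=
          (ZMod.isUnit_iff_coprime m _).mpr hmcop
        set s1 := (((m : ZMod (p ^ (ℓ - j))))⁻¹ * (t : ZMod (p ^ (ℓ - j)))).val with hs1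
        have hs1lt : s1 < p ^ (ℓ - j) := ZMod.val_lt _
        have hms1 : m * s1 ≡ t [MOD p ^ (ℓ - j)] := by
          have : ((m * s1 : ℕ) : ZMod (p ^ (ℓ - j))) = ((t : ℕ) : ZMod (p ^ (ℓ - j))) := by
            push_cast
            rw [hs1, ZMod.natCast_val, ZMod.cast_id, ← mul_assoc,
              ZMod.mul_inv_of_unit _ hunit, one_mul]
          exact (ZMod.natCast_eq_natCast_iff _ _ _).mp this
        have key : m * (p ^ v + s1 * p ^ j) ≡ n [MOD p ^ ℓ] := by
          have h5 : m * s1 * p ^ j ≡ t * p ^ j [MOD p ^ ℓ] := by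
            have := hms1.mul_right' (c := p ^ j)
            rwa [hMj] at this
          calc m * (p ^ v + s1 * p ^ j) = m * p ^ v + m * s1 * p ^ j := by ring
            _ ≡ m * p ^ v + t * p ^ j [MOD p ^ ℓ] := (h5.add_left _)
            _ = n := by
                rw [← hun, ← hut, ← hvd', pow_add]; ring
        refine ⟨(m : ℤ), by positivity, by exact_mod_cast hmlam,
          by exact_mod_cast hm0, ((p ^ v + s1 * p ^ j : ℕ) : ZMod (p ^ ℓ)), ?_, ?_⟩
        · exact Finset.mem_image.mpr ⟨(p ^ v, s1), by
            simp only [Finset.mem_product, Finset.mem_union, Finset.mem_image,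
              Finset.mem_range, Finset.mem_singleton]
            exact ⟨Or.inl ⟨v, hjv, rfl⟩, hs1lt⟩, rfl⟩
        · have hcast : ((m * (p ^ v + s1 * p ^ j) : ℕ) : ZMod (p ^ ℓ)) = a := by
            rw [(ZMod.natCast_eq_natCast_iff _ _ _).mpr key, hna]
          rw [← hcast]
          push_cast
          ring
  constructor
  · -- cardinality
    rw [Finset.card_image_of_injOn, Finset.card_product, Finset.card_range,
      Finset.card_union_of_disjoint, Finset.card_image_of_injective _
        (Nat.pow_right_injective hp2), Finset.card_range, Finset.card_singleton]
    · rw [Finset.disjoint_singleton_right, Finset.mem_image]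
      rintro ⟨i, -, h⟩
      exact (pow_pos hp0 i).ne' h
    · intro x hx y hy hxy
      simp only [Finset.coe_product, Set.mem_prod, Finset.mem_coe,
        Finset.mem_range] at hx hy
      have hx1 : x.1 < p ^ j := hbd _ hx.1
      have hy1 : y.1 < p ^ j := hbd _ hy.1
      have hxb : x.1 + x.2 * p ^ j < p ^ ℓ := by
        calc x.1 + x.2 * p ^ j < (x.2 + 1) * p ^ j := by rw [Nat.add_mul, one_mul]; omega
          _ ≤ p ^ (ℓ - j) * p ^ j := Nat.mul_le_mul_right _ (by omega)
          _ = p ^ ℓ := hMj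
      have hyb : y.1 + y.2 * p ^ j < p ^ ℓ := by
        calc y.1 + y.2 * p ^ j < (y.2 + 1) * p ^ j := by rw [Nat.add_mul, one_mul]; omega
          _ ≤ p ^ (ℓ - j) * p ^ j := Nat.mul_le_mul_right _ (by omega)
          _ = p ^ ℓ := hMj
      have heq : x.1 + x.2 * p ^ j = y.1 + y.2 * p ^ j := by
        have := congrArg ZMod.val hxy
        rwa [ZMod.val_cast_of_lt hxb, ZMod.val_cast_of_lt hyb] at this
      have h1' : x.1 = y.1 := by
        have := congrArg (· % p ^ j) heq
        simpa [Nat.add_mul_mod_self_right, Nat.mod_eq_of_lt hx1,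
          Nat.mod_eq_of_lt hy1] using this
      have h2' : x.2 = y.2 := by
        have hx2 : x.2 * p ^ j = y.2 * p ^ j := by omega
        exact Nat.eq_of_mul_eq_mul_right (pow_pos hp0 j) hx2
      exact Prod.ext h1' h2'
  · -- the size bound
    have hlampos : (0 : ℝ) < lam := by exact_mod_cast hlam1
    have hsqpos : 0 < Real.sqrt lam := Real.sqrt_pos.mpr hlampos
    have hsq : Real.sqrt lam < (p : ℝ) ^ j := by
      rw [show ((p : ℝ) ^ j) = Real.sqrt (((p : ℝ) ^ j) ^ 2) from
        (Real.sqrt_sq (by positivity)).symm]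
      apply Real.sqrt_lt_sqrt hlampos.le
      have : lam < p ^ (2 * j) :=
        lt_of_lt_of_le h2 (Nat.pow_le_pow_right hp0 (by omega))
      calc (lam : ℝ) < (p : ℝ) ^ (2 * j) := by exact_mod_cast this
        _ = ((p : ℝ) ^ j) ^ 2 := by rw [← pow_mul]; ring_nf
    have hppos : (0 : ℝ) < (p : ℝ) ^ (ℓ - j) := by positivity
    have h6 : (p : ℝ) ^ (ℓ - j) * (p : ℝ) ^ j = (p : ℝ) ^ ℓ := by
      rw [← pow_add, Nat.sub_add_cancel hj2.le]
    rw [lt_div_iff₀ hsqpos]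
    push_cast
    have hj0 : (0 : ℝ) < (j : ℝ) + 1 := by positivity
    nlinarith [mul_lt_mul_of_pos_left hsq hppos]
end

section
/- Let p be a prime, ℓ ≥ 1 an integer, and let q̃ ≥ 2 be an integer with gcd(q̃, p) = 1; set q = q̃·p^ℓ. Let λ be an integer with 1 ≤ λ < q̃, and suppose S_0 ⊆ Z_{q̃} is a (λ,0;q̃)-covering set with #S_0 = s. Then there exists a (λ,0;q)-covering set S ⊆ Z_q with #S ≤ s·(⌊log q̃ / log p⌋ + 1)·p^ℓ. -/
set_option maxHeartbeats 1000000

theorem stmt8 (p : ℕ) (hp : p.Prime) (ℓ : ℕ) (hℓ : 1 ≤ ℓ) (qt : ℕ) (hqt : 2 ≤ qt)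
    (hcop : Nat.gcd qt p = 1) (lam : ℕ) (h1 : 1 ≤ lam) (h2 : lam < qt)
    (S0 : Finset (ZMod qt)) (hS0 : IsCoveringSet qt lam 0 S0) :
    ∃ S : Finset (ZMod (qt * p ^ ℓ)), IsCoveringSet (qt * p ^ ℓ) lam 0 S ∧
      S.card ≤ S0.card * (Nat.log p qt + 1) * p ^ ℓ := by
  classical
  haveI : NeZero (p ^ ℓ) := ⟨pow_ne_zero ℓ hp.pos.ne'⟩
  have hcop' : Nat.Coprime qt (p ^ ℓ) := (Nat.coprime_iff_gcd_eq_one.mpr hcop).pow_right ℓ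
  set L := Nat.log p qt with hL
  obtain ⟨e⟩ : Nonempty (ZMod (qt * p ^ ℓ) ≃+* ZMod qt × ZMod (p ^ ℓ)) := ⟨ZMod.chineseRemainder hcop'⟩
  refine ⟨Finset.image (fun x : ZMod qt × ℕ × ZMod (p ^ ℓ) =>
      e.symm ((p : ZMod qt) ^ x.2.1 * x.1, x.2.2))
      (S0 ×ˢ Finset.range (L + 1) ×ˢ Finset.univ), ?_, ?_⟩
  · intro a
    obtain ⟨m, hm0, hmlam, hmne, s0, hs0, hms⟩ := hS0 (e a).1
    have hmpos : 0 < m := lt_of_le_of_ne (by simpa using hm0) (Ne.symm hmne)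
    set M := m.toNat with hM
    have hMm : (M : ℤ) = m := Int.toNat_of_nonneg hmpos.le
    have hMpos : 0 < M := by omega
    set j := M.factorization p with hj
    set m' := M / p ^ j with hm'
    have hfac : p ^ j * m' = M := Nat.ordProj_mul_ordCompl_eq_self M p
    have hndvd : ¬ p ∣ m' := Nat.not_dvd_ordCompl hp hMpos.ne'
    have hm'pos : 0 < m' := Nat.ordCompl_pos p hMpos.ne'
    have hm'le : m' ≤ M := Nat.div_le_self _ _
    have hMle : M ≤ lam := by omega
    have hjle : j ≤ L := by
      have h1' : p ^ j ≤ M := Nat.ordProj_le p hMpos.ne'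
      have h2' : p ^ j ≤ qt := le_trans h1' (le_of_lt (lt_of_le_of_lt hMle h2))
      exact (Nat.le_log_iff_pow_le hp.one_lt (by omega)).mpr h2'
    have hcopm' : Nat.Coprime m' (p ^ ℓ) :=
      Nat.Coprime.pow_right ℓ ((hp.coprime_iff_not_dvd.mpr hndvd).symm)
    have hunit : IsUnit ((m' : ZMod (p ^ ℓ))) :=
      (ZMod.isUnit_iff_coprime m' (p ^ ℓ)).mpr hcopm'
    obtain ⟨u, hu⟩ := hunit
    refine ⟨(m' : ℤ), by simp, by exact_mod_cast le_trans hm'le hMle,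
      Int.natCast_ne_zero.mpr hm'pos.ne', e.symm ((p : ZMod qt) ^ j * s0, ↑u⁻¹ * (e a).2),
      ?_, ?_⟩
    · exact Finset.mem_image.mpr ⟨(s0, j, ↑u⁻¹ * (e a).2),
        by simp [Finset.mem_product, hs0, Nat.lt_succ_of_le hjle], rfl⟩
    · apply e.injective
      rw [map_mul, RingEquiv.apply_symm_apply]
      have hcast : e (((m' : ℤ) : ZMod (qt * p ^ ℓ))) = ((m' : ZMod qt), (m' : ZMod (p ^ ℓ))) := by
        push_cast
        exact Prod.ext (by simp [map_natCast]) (by simp [map_natCast])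
      rw [hcast]
      refine Prod.ext ?_ ?_
      · show (m' : ZMod qt) * ((p : ZMod qt) ^ j * s0) = (e a).1
        have : ((m : ℤ) : ZMod qt) = ((M : ℕ) : ZMod qt) := by rw [← hMm]; push_cast; ring
        rw [← hms, this, ← hfac]
        push_cast
        ring
      · show (m' : ZMod (p ^ ℓ)) * (↑u⁻¹ * (e a).2) = (e a).2
        rw [← hu]
        exact Units.mul_inv_cancel_left u _
  · calc (Finset.image _ _).card ≤ (S0 ×ˢ Finset.range (L + 1) ×ˢ Finset.univ).card :=
          Finset.card_image_le
      _ = S0.card * ((L + 1) * p ^ ℓ) := by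
          simp [Finset.card_product, ZMod.card]
      _ = S0.card * (L + 1) * p ^ ℓ := by ring
end

section
/- Let p be a prime, ℓ ≥ 1 an integer, and let q̃ ≥ 2 be an integer with gcd(q̃, p) = 1; set q = q̃·p^ℓ. Let λ be an integer with q̃ ≤ λ < q. Then the set S = {s_0 + s_1·q̃ : s_0 ∈ {p^i : i = 0, …, ⌊log q̃ / log p⌋} ∪ {0}, 0 ≤ s_1 < p^ℓ} is a (λ,0;q)-covering set of Z_q of cardinality at most (⌊log q̃ / log p⌋ + 2)·p^ℓ. -/
theorem stmt9 (p : ℕ) (hp : p.Prime) (ℓ : ℕ) (hℓ : 1 ≤ ℓ) (qt : ℕ) (hqt : 2 ≤ qt)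
    (hcop : Nat.gcd qt p = 1) (lam : ℕ) (h1 : qt ≤ lam) (h2 : lam < qt * p ^ ℓ) :
    IsCoveringSet (qt * p ^ ℓ) lam 0
      ((((Finset.range (Nat.log p qt + 1)).image (fun i => p ^ i) ∪ {0}) ×ˢ
          Finset.range (p ^ ℓ)).image
        (fun x => ((x.1 + x.2 * qt : ℕ) : ZMod (qt * p ^ ℓ)))) ∧
    ((((Finset.range (Nat.log p qt + 1)).image (fun i => p ^ i) ∪ {0}) ×ˢ
          Finset.range (p ^ ℓ)).image
        (fun x => ((x.1 + x.2 * qt : ℕ) : ZMod (qt * p ^ ℓ)))).card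
      ≤ (Nat.log p qt + 2) * p ^ ℓ := by
  have hp1 : 1 < p := hp.one_lt
  have hppos : 0 < p ^ ℓ := pow_pos hp.pos ℓ
  have hq : 0 < qt * p ^ ℓ := by positivity
  haveI : NeZero (qt * p ^ ℓ) := ⟨hq.ne'⟩
  haveI : NeZero (p ^ ℓ) := ⟨hppos.ne'⟩
  have hqp : Nat.Coprime qt p := hcop
  constructor
  · intro a
    set n := a.val with hn
    set n1 : ℕ := if n % qt = 0 then qt else n % qt with hn1
    have hmodlt : n % qt < qt := Nat.mod_lt n (by omega)
    have hn1pos : 0 < n1 := by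
      rcases eq_or_ne (n % qt) 0 with h | h <;> simp [hn1, h] <;> omega
    have hn1le : n1 ≤ qt := by
      rcases eq_or_ne (n % qt) 0 with h | h <;> simp [hn1, h] <;> omega
    have hn1mod : n1 ≡ n [MOD qt] := by
      unfold Nat.ModEq
      rcases eq_or_ne (n % qt) 0 with h | h
      · simp [hn1, h, Nat.mod_self]
      · simp [hn1, h, Nat.mod_eq_of_lt hmodlt]
    set i : ℕ := n1.factorization p with hi
    set m : ℕ := n1 / p ^ i with hm
    have hfac : p ^ i * m = n1 := Nat.ordProj_mul_ordCompl_eq_self n1 p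
    have hpm : ¬ p ∣ m := Nat.not_dvd_ordCompl hp hn1pos.ne'
    have hpile : p ^ i ≤ qt :=
      le_trans (Nat.le_of_dvd hn1pos (Nat.ordProj_dvd n1 p)) hn1le
    have hilog : i ≤ Nat.log p qt :=
      (Nat.le_log_iff_pow_le hp1 (by omega)).mpr hpile
    have hm1 : 1 ≤ m := by
      rcases Nat.eq_zero_or_pos m with h | h
      · rw [h, mul_zero] at hfac; omega
      · exact h
    have hmle : m ≤ qt := le_trans (Nat.le_of_dvd hn1pos (Nat.ordCompl_dvd n1 p)) hn1le
    have hmp : Nat.Coprime m p := ((Nat.Prime.coprime_iff_not_dvd hp).mpr hpm).symm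
    have hco : Nat.Coprime (m * qt) (p ^ ℓ) := (hmp.mul hqp).pow_right ℓ
    have hu : IsUnit ((m * qt : ℕ) : ZMod (p ^ ℓ)) := (ZMod.isUnit_iff_coprime _ _).mpr hco
    set t : ZMod (p ^ ℓ) :=
      ((m * qt : ℕ) : ZMod (p ^ ℓ))⁻¹ * ((n : ZMod (p ^ ℓ)) - ((m * p ^ i : ℕ) : ZMod (p ^ ℓ)))
      with ht
    set s1 : ℕ := t.val with hs1
    have hs1lt : s1 < p ^ ℓ := ZMod.val_lt t
    have hts1 : ((s1 : ℕ) : ZMod (p ^ ℓ)) = t := ZMod.natCast_rightInverse t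
    have hcancel : ((m * qt : ℕ) : ZMod (p ^ ℓ)) * ((m * qt : ℕ) : ZMod (p ^ ℓ))⁻¹ = 1 :=
      ZMod.mul_inv_of_unit _ hu
    have hmodp : (m * (p ^ i + s1 * qt) : ℕ) ≡ n [MOD p ^ ℓ] := by
      have key : ((m * (p ^ i + s1 * qt) : ℕ) : ZMod (p ^ ℓ)) = ((n : ℕ) : ZMod (p ^ ℓ)) := by
        push_cast
        push_cast at hts1
        rw [hts1, ht]
        push_cast
        have := hcancel
        push_cast at this
        calc (m : ZMod (p ^ ℓ)) * ((p : ZMod (p ^ ℓ)) ^ i +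
              ((m : ZMod (p ^ ℓ)) * qt)⁻¹ *
                ((n : ZMod (p ^ ℓ)) - (m : ZMod (p ^ ℓ)) * (p : ZMod (p ^ ℓ)) ^ i) * qt)
            = (m : ZMod (p ^ ℓ)) * (p : ZMod (p ^ ℓ)) ^ i +
              ((m : ZMod (p ^ ℓ)) * qt * ((m : ZMod (p ^ ℓ)) * qt)⁻¹) *
                ((n : ZMod (p ^ ℓ)) - (m : ZMod (p ^ ℓ)) * (p : ZMod (p ^ ℓ)) ^ i) := by ring
          _ = (n : ZMod (p ^ ℓ)) := by rw [this]; ring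
      exact (ZMod.natCast_eq_natCast_iff _ _ _).mp key
    have hmodq : (m * (p ^ i + s1 * qt) : ℕ) ≡ n [MOD qt] := by
      have heq : m * (p ^ i + s1 * qt) = n1 + m * s1 * qt := by rw [← hfac]; ring
      rw [heq]
      calc n1 + m * s1 * qt ≡ n1 + 0 [MOD qt] :=
            (Nat.ModEq.refl n1).add ((Nat.modEq_zero_iff_dvd).mpr ⟨m * s1, by ring⟩)
        _ = n1 := by ring
        _ ≡ n [MOD qt] := hn1mod
    have hmod : (m * (p ^ i + s1 * qt) : ℕ) ≡ n [MOD qt * p ^ ℓ] :=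
      (Nat.modEq_and_modEq_iff_modEq_mul (hqp.pow_right ℓ)).mp ⟨hmodq, hmodp⟩
    refine ⟨(m : ℤ), by positivity, by exact_mod_cast le_trans hmle h1,
      by exact_mod_cast (by omega : m ≠ 0), ((p ^ i + s1 * qt : ℕ) : ZMod (qt * p ^ ℓ)), ?_, ?_⟩
    · refine Finset.mem_image.mpr ⟨(p ^ i, s1), ?_, rfl⟩
      refine Finset.mem_product.mpr ⟨?_, Finset.mem_range.mpr hs1lt⟩
      exact Finset.mem_union_left _ (Finset.mem_image.mpr ⟨i, Finset.mem_range.mpr (by omega), rfl⟩)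
    · have hcast : ((m * (p ^ i + s1 * qt) : ℕ) : ZMod (qt * p ^ ℓ)) = ((n : ℕ) : ZMod (qt * p ^ ℓ)) :=
        (ZMod.natCast_eq_natCast_iff _ _ _).mpr hmod
      have hna : ((n : ℕ) : ZMod (qt * p ^ ℓ)) = a := ZMod.natCast_rightInverse a
      push_cast at hcast ⊢
      rw [hcast, hna]
  · refine le_trans Finset.card_image_le ?_
    rw [Finset.card_product, Finset.card_range]
    refine Nat.mul_le_mul_right _ ?_
    refine le_trans (Finset.card_union_le _ _) ?_
    simp only [Finset.card_singleton]
    have := Finset.card_image_le (s := Finset.range (Nat.log p qt + 1)) (f := fun i => p ^ i)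
    simp only [Finset.card_range] at this
    omega
end

section
/- For any integer q ≥ 1 and non-negative integers λ, μ < q with λ + μ ≥ 1, one has ω_{λ,μ}(q) ≤ Σ_{d | q} ω*_{λ,μ}(q/d), where the sum is over the positive divisors d of q (and λ, μ are reduced modulo q/d where necessary, i.e., ω*_{λ,μ}(q') is interpreted with the set M = {−μ,…,λ}\{0} taken modulo q'). -/
/-- `ω_{lam,mu}(q)`: the minimal cardinality of a `(lam, mu; q)`-covering set. -/
noncomputable def omegaCov (q lam mu : ℕ) : ℕ :=
  sInf {n | ∃ S : Finset (ZMod q), IsCoveringSet q lam mu S ∧ S.card = n}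

/-- `ω*_{lam,mu}(q)`: the minimal cardinality of a set `S ⊆ Z_q` whose product set
`M·S` covers all invertible residue classes modulo `q`. -/
noncomputable def omegaStar (q lam mu : ℕ) : ℕ :=
  sInf {n | ∃ S : Finset (ZMod q), S.card = n ∧ ∀ a : ZMod q, IsUnit a →
    ∃ m : ℤ, -(mu : ℤ) ≤ m ∧ m ≤ (lam : ℤ) ∧ m ≠ 0 ∧ ∃ s ∈ S, (m : ZMod q) * s = a}

lemma exists_min_star (e lam mu : ℕ) (he : 0 < e) (h : 1 ≤ lam + mu) :
    ∃ S : Finset (ZMod e), S.card = omegaStar e lam mu ∧ ∀ a : ZMod e, IsUnit a →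
      ∃ m : ℤ, -(mu : ℤ) ≤ m ∧ m ≤ (lam : ℤ) ∧ m ≠ 0 ∧ ∃ s ∈ S, (m : ZMod e) * s = a := by
  haveI : NeZero e := ⟨he.ne'⟩
  have hne : {n | ∃ S : Finset (ZMod e), S.card = n ∧ ∀ a : ZMod e, IsUnit a →
      ∃ m : ℤ, -(mu : ℤ) ≤ m ∧ m ≤ (lam : ℤ) ∧ m ≠ 0 ∧
        ∃ s ∈ S, (m : ZMod e) * s = a}.Nonempty := by
    refine ⟨(Finset.univ : Finset (ZMod e)).card, Finset.univ, rfl, fun a _ => ?_⟩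
    rcases Nat.one_le_iff_ne_zero.mp h |> fun _ => (Nat.lt_or_ge lam 1) with hl | hl
    · -- lam = 0, so mu ≥ 1
      have hmu1 : 1 ≤ mu := by omega
      exact ⟨-1, by omega, by omega, by norm_num, -a, Finset.mem_univ _, by push_cast; ring⟩
    · exact ⟨1, by omega, by omega, one_ne_zero, a, Finset.mem_univ _, by push_cast; ring⟩
  have := Nat.sInf_mem hne
  obtain ⟨S, hS, hcov⟩ := this
  exact ⟨S, hS, hcov⟩

theorem stmt13 (q lam mu : ℕ) (hq : 1 ≤ q) (hlam : lam < q) (hmu : mu < q)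
    (h : 1 ≤ lam + mu) :
    omegaCov q lam mu ≤ ∑ d ∈ q.divisors, omegaStar (q / d) lam mu := by
  haveI : NeZero q := ⟨by omega⟩
  have key : ∀ d ∈ q.divisors, ∃ S : Finset (ZMod (q / d)),
      S.card = omegaStar (q / d) lam mu ∧ ∀ a : ZMod (q / d), IsUnit a →
      ∃ m : ℤ, -(mu : ℤ) ≤ m ∧ m ≤ (lam : ℤ) ∧ m ≠ 0 ∧
        ∃ s ∈ S, (m : ZMod (q / d)) * s = a := by
    intro d hd
    have hdvd : d ∣ q := (Nat.mem_divisors.mp hd).1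
    have hdpos : 0 < d := Nat.pos_of_mem_divisors hd
    exact exists_min_star _ _ _ (Nat.div_pos (Nat.le_of_dvd (by omega) hdvd) hdpos) h
  choose S hcard hcov using key
  set T : Finset (ZMod q) := q.divisors.attach.biUnion
    (fun d => (S d.1 d.2).image (fun s => ((d.1 : ZMod q)) * (s.val : ZMod q))) with hT
  have hTcov : IsCoveringSet q lam mu T := by
    intro a
    set n := a.val with hn
    set g := Nat.gcd n q with hg
    have hgdvd : g ∣ q := Nat.gcd_dvd_right n q
    have hgpos : 0 < g := Nat.gcd_pos_of_pos_right n (by omega)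
    have hgmem : g ∈ q.divisors := Nat.mem_divisors.mpr ⟨hgdvd, by omega⟩
    set e := q / g with he
    have hepos : 0 < e := Nat.div_pos (Nat.le_of_dvd (by omega) hgdvd) hgpos
    haveI : NeZero e := ⟨hepos.ne'⟩
    set u := n / g with hu
    have hcop : Nat.Coprime u e := Nat.coprime_div_gcd_div_gcd hgpos
    have hunit : IsUnit ((u : ZMod e)) := (ZMod.isUnit_iff_coprime u e).mpr hcop
    obtain ⟨m, hm1, hm2, hm0, s, hs, heq⟩ := hcov g hgmem (u : ZMod e) hunit
    refine ⟨m, hm1, hm2, hm0, (g : ZMod q) * (s.val : ZMod q), ?_, ?_⟩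
    · exact Finset.mem_biUnion.mpr ⟨⟨g, hgmem⟩, Finset.mem_attach _ _,
        Finset.mem_image.mpr ⟨s, hs, rfl⟩⟩
    · -- arithmetic
      have hsval : ((s.val : ZMod e)) = s := by
        simp [ZMod.natCast_val, ZMod.cast_id]
      have heq' : ((m * (s.val : ℤ) - (u : ℤ) : ℤ) : ZMod e) = 0 := by
        push_cast
        rw [hsval, heq]
        ring
      have hdvd1 : (e : ℤ) ∣ m * (s.val : ℤ) - (u : ℤ) :=
        (ZMod.intCast_zmod_eq_zero_iff_dvd _ _).mp heq'
      have hge : g * e = q := Nat.mul_div_cancel' hgdvd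
      have hgu : g * u = n := Nat.mul_div_cancel' (Nat.gcd_dvd_left n q)
      have hdvd2 : (q : ℤ) ∣ (g : ℤ) * (m * (s.val : ℤ)) - (n : ℤ) := by
        have : (g : ℤ) * (m * (s.val : ℤ)) - (n : ℤ)
            = (g : ℤ) * (m * (s.val : ℤ) - (u : ℤ)) := by
          have : (g : ℤ) * (u : ℤ) = (n : ℤ) := by exact_mod_cast congrArg Nat.cast hgu
          linarith [this]
        rw [this]
        have hqge : (q : ℤ) = (g : ℤ) * (e : ℤ) := by exact_mod_cast hge.symm
        rw [hqge]
        exact mul_dvd_mul_left _ hdvd1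
      have : (((g : ℤ) * (m * (s.val : ℤ)) : ℤ) : ZMod q) = ((n : ℤ) : ZMod q) := by
        have := (ZMod.intCast_zmod_eq_zero_iff_dvd _ q).mpr hdvd2
        push_cast at this ⊢
        linear_combination this
      have hna : ((n : ZMod q)) = a := by
        simp [hn, ZMod.natCast_val, ZMod.cast_id]
      calc (m : ZMod q) * ((g : ZMod q) * (s.val : ZMod q))
          = (((g : ℤ) * (m * (s.val : ℤ)) : ℤ) : ZMod q) := by push_cast; ring
        _ = ((n : ℤ) : ZMod q) := this
        _ = a := by rw [Int.cast_natCast, hna]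
  have h1 : omegaCov q lam mu ≤ T.card := Nat.sInf_le ⟨T, hTcov, rfl⟩
  refine h1.trans ?_
  calc T.card ≤ ∑ d ∈ q.divisors.attach,
        ((S d.1 d.2).image (fun s => ((d.1 : ZMod q)) * (s.val : ZMod q))).card :=
        Finset.card_biUnion_le
    _ ≤ ∑ d ∈ q.divisors.attach, (S d.1 d.2).card :=
        Finset.sum_le_sum (fun d _ => Finset.card_image_le)
    _ = ∑ d ∈ q.divisors.attach, omegaStar (q / d.1) lam mu := by
        exact Finset.sum_congr rfl (fun d _ => hcard d.1 d.2)
    _ = ∑ d ∈ q.divisors, omegaStar (q / d) lam mu := by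
        exact Finset.sum_attach q.divisors (fun d => omegaStar (q / d) lam mu)
end

section
/- There exists an absolute constant c > 0 such that for all integers q ≥ 3, all non-negative integers λ ≥ μ with λ ≥ 1, and all positive integers N with N·λ < q, one has ν_{λ,μ}(q,N) ≥ c·(λ+μ)·N·(log q)^{−3}. -/
private lemma div_gcd_dvd {m m' s s' : ℕ} (hm : 0 < m) (h : m * s = m' * s') :
    m' / Nat.gcd m m' ∣ s := by
  have hgpos : 0 < Nat.gcd m m' := Nat.gcd_pos_of_pos_left _ hm
  have hga : Nat.gcd m m' ∣ m := Nat.gcd_dvd_left m m'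
  have hgb : Nat.gcd m m' ∣ m' := Nat.gcd_dvd_right m m'
  have hco : Nat.Coprime (m / Nat.gcd m m') (m' / Nat.gcd m m') :=
    Nat.coprime_div_gcd_div_gcd hgpos
  have h2 : (m / Nat.gcd m m') * s = (m' / Nat.gcd m m') * s' := by
    apply Nat.eq_of_mul_eq_mul_left hgpos
    rw [← mul_assoc, Nat.mul_div_cancel' hga, ← mul_assoc, Nat.mul_div_cancel' hgb]
    exact h
  exact hco.symm.dvd_of_dvd_mul_left ⟨s', h2⟩

private lemma main_count (lam N : ℕ) (hlam : 1 ≤ lam) (hN : 1 ≤ N) :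
    ∃ P : Finset ℕ, (∀ n ∈ P, ∃ m s, 1 ≤ m ∧ m ≤ lam ∧ 1 ≤ s ∧ s ≤ N ∧ m * s = n) ∧
      (lam : ℝ) * N / (1 + Real.log lam) ^ 2 ≤ (P.card : ℝ) := by
  classical
  set A := Finset.Icc 1 lam with hA
  set B := Finset.Icc 1 N with hB
  set T := A ×ˢ B with hT
  set f : ℕ × ℕ → ℕ := fun p => p.1 * p.2 with hf
  set P := T.image f with hP
  have hmemT : ∀ p ∈ T, 1 ≤ p.1 ∧ p.1 ≤ lam ∧ 1 ≤ p.2 ∧ p.2 ≤ N := by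
    intro p hp
    obtain ⟨h1, h2⟩ := Finset.mem_product.1 hp
    exact ⟨(Finset.mem_Icc.1 h1).1, (Finset.mem_Icc.1 h1).2,
      (Finset.mem_Icc.1 h2).1, (Finset.mem_Icc.1 h2).2⟩
  refine ⟨P, ?_, ?_⟩
  · intro n hn
    obtain ⟨p, hp, hpn⟩ := Finset.mem_image.1 hn
    obtain ⟨h1, h2, h3, h4⟩ := hmemT p hp
    exact ⟨p.1, p.2, h1, h2, h3, h4, hpn⟩
  set F : ℕ → Finset (ℕ × ℕ) := fun n => T.filter (fun p => f p = n) with hF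
  have hTcard : T.card = lam * N := by
    simp [hT, hA, hB, Nat.card_Icc]
  have hsum : T.card = ∑ n ∈ P, (F n).card := Finset.card_eq_sum_card_image f T
  set Sig := P.sigma (fun n => (F n) ×ˢ (F n)) with hSig
  have hSigcard : Sig.card = ∑ n ∈ P, (F n).card ^ 2 := by
    rw [Finset.card_sigma]
    exact Finset.sum_congr rfl fun n _ => by rw [Finset.card_product, sq]
  set G := (A ×ˢ A).sigma
      (fun p => Finset.Icc 1 (lam / p.1) ×ˢ Finset.Icc 1 (N / p.2)) with hG
  -- the injection
  have hmemF : ∀ n, ∀ p ∈ F n, p ∈ T ∧ p.1 * p.2 = n := by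
    intro n p hp
    exact ⟨(Finset.mem_filter.1 hp).1, (Finset.mem_filter.1 hp).2⟩
  have hinj : Sig.card ≤ G.card := by
    apply Finset.card_le_card_of_injOn
      (fun x => ⟨(Nat.gcd x.2.1.1 x.2.2.1, x.2.2.1 / Nat.gcd x.2.1.1 x.2.2.1),
        (x.2.1.1 / Nat.gcd x.2.1.1 x.2.2.1,
         x.2.1.2 / (x.2.2.1 / Nat.gcd x.2.1.1 x.2.2.1))⟩)
    · rintro ⟨n, ⟨m, s⟩, ⟨m', s'⟩⟩ hx
      rw [Finset.mem_coe, Finset.mem_sigma, Finset.mem_product] at hx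
      obtain ⟨hnP, hx1, hx2⟩ := hx
      obtain ⟨hT1, he1⟩ := hmemF n _ hx1
      obtain ⟨hT2, he2⟩ := hmemF n _ hx2
      obtain ⟨hm1, hm2, hs1, hs2⟩ := hmemT _ hT1
      obtain ⟨hm'1, hm'2, hs'1, hs'2⟩ := hmemT _ hT2
      simp only at hm1 hm2 hs1 hs2 hm'1 hm'2 hs'1 hs'2 he1 he2
      have heq : m * s = m' * s' := by rw [he1, he2]
      have hgpos : 0 < Nat.gcd m m' := Nat.gcd_pos_of_pos_left _ hm1
      have hga : Nat.gcd m m' ∣ m := Nat.gcd_dvd_left m m'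
      have hgb : Nat.gcd m m' ∣ m' := Nat.gcd_dvd_right m m'
      have hbdvd : m' / Nat.gcd m m' ∣ s := div_gcd_dvd hm1 heq
      have hbpos : 0 < m' / Nat.gcd m m' :=
        Nat.div_pos (Nat.le_of_dvd hm'1 hgb) hgpos
      rw [Finset.mem_coe, Finset.mem_sigma, Finset.mem_product, Finset.mem_product]
      refine ⟨⟨Finset.mem_Icc.2 ⟨hgpos, le_trans (Nat.gcd_le_left _ hm1) hm2⟩,
        Finset.mem_Icc.2 ⟨hbpos, le_trans (Nat.div_le_self _ _) hm'2⟩⟩,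
        Finset.mem_Icc.2 ⟨Nat.div_pos (Nat.le_of_dvd hm1 hga) hgpos,
          Nat.div_le_div_right hm2⟩,
        Finset.mem_Icc.2 ⟨Nat.div_pos (Nat.le_of_dvd hs1 hbdvd) hbpos, ?_⟩⟩
      calc s / (m' / Nat.gcd m m') ≤ N / (m' / Nat.gcd m m') :=
            Nat.div_le_div_right hs2
        _ = N / (m' / Nat.gcd m m') := rfl
    · rintro ⟨n₁, ⟨m₁, s₁⟩, ⟨m₁', s₁'⟩⟩ hx ⟨n₂, ⟨m₂, s₂⟩, ⟨m₂', s₂'⟩⟩ hy hxy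
      simp only [Finset.mem_coe] at hx hy
      rw [Finset.mem_sigma, Finset.mem_product] at hx hy
      obtain ⟨hnP₁, hx1, hx2⟩ := hx
      obtain ⟨hnP₂, hy1, hy2⟩ := hy
      obtain ⟨hT1, he1⟩ := hmemF _ _ hx1
      obtain ⟨hT2, he2⟩ := hmemF _ _ hx2
      obtain ⟨hT3, he3⟩ := hmemF _ _ hy1
      obtain ⟨hT4, he4⟩ := hmemF _ _ hy2
      obtain ⟨hm1, _, hs1, _⟩ := hmemT _ hT1
      obtain ⟨hm'1, _, hs'1, _⟩ := hmemT _ hT2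
      obtain ⟨hm2, _, hs2, _⟩ := hmemT _ hT3
      obtain ⟨hm'2, _, hs'2, _⟩ := hmemT _ hT4
      simp only at hm1 hs1 hm'1 hs'1 hm2 hs2 hm'2 hs'2 he1 he2 he3 he4
      simp only [Sigma.mk.inj_iff, Prod.mk.injEq, heq_eq_eq] at hxy
      obtain ⟨⟨hg, hb⟩, ha, ht⟩ := hxy
      have heqx : m₁ * s₁ = m₁' * s₁' := by rw [he1, he2]
      have heqy : m₂ * s₂ = m₂' * s₂' := by rw [he3, he4]
      have hgx : 0 < Nat.gcd m₁ m₁' := Nat.gcd_pos_of_pos_left _ hm1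
      have hbx : m₁' / Nat.gcd m₁ m₁' ∣ s₁ := div_gcd_dvd hm1 heqx
      have hby : m₂' / Nat.gcd m₂ m₂' ∣ s₂ := div_gcd_dvd hm2 heqy
      have hm : m₁ = m₂ := by
        have h1 : Nat.gcd m₁ m₁' * (m₁ / Nat.gcd m₁ m₁') = m₁ :=
          Nat.mul_div_cancel' (Nat.gcd_dvd_left _ _)
        have h2 : Nat.gcd m₂ m₂' * (m₂ / Nat.gcd m₂ m₂') = m₂ :=
          Nat.mul_div_cancel' (Nat.gcd_dvd_left _ _)
        rw [← h1, ← h2, ha, hg]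
      have hm' : m₁' = m₂' := by
        have h1 : Nat.gcd m₁ m₁' * (m₁' / Nat.gcd m₁ m₁') = m₁' :=
          Nat.mul_div_cancel' (Nat.gcd_dvd_right _ _)
        have h2 : Nat.gcd m₂ m₂' * (m₂' / Nat.gcd m₂ m₂') = m₂' :=
          Nat.mul_div_cancel' (Nat.gcd_dvd_right _ _)
        rw [← h1, ← h2, hb, hg]
      have hs : s₁ = s₂ := by
        have h1 : (m₁' / Nat.gcd m₁ m₁') * (s₁ / (m₁' / Nat.gcd m₁ m₁')) = s₁ :=
          Nat.mul_div_cancel' hbx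
        have h2 : (m₂' / Nat.gcd m₂ m₂') * (s₂ / (m₂' / Nat.gcd m₂ m₂')) = s₂ :=
          Nat.mul_div_cancel' hby
        rw [← h1, ← h2, ht, hb]
      have hn : n₁ = n₂ := by rw [← he1, ← he3, hm, hs]
      have hs' : s₁' = s₂' := by
        apply Nat.eq_of_mul_eq_mul_left (show 0 < m₁' from hm'1)
        rw [← heqx, hm, hs, heqy, hm']
      subst hm hm' hs hs' hn
      rfl
  have hGcard : G.card = (∑ g ∈ A, lam / g) * (∑ b ∈ A, N / b) := by
    rw [Finset.card_sigma]
    rw [Finset.sum_mul_sum]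
    rw [← Finset.sum_product']
    exact Finset.sum_congr rfl fun p _ => by
      rw [Finset.card_product, Nat.card_Icc, Nat.card_Icc]; simp
  -- real estimates
  have hll : (0:ℝ) ≤ Real.log lam := Real.log_natCast_nonneg lam
  have hharm : ∑ g ∈ A, ((g : ℝ))⁻¹ ≤ 1 + Real.log lam := by
    have h := harmonic_le_one_add_log lam
    rw [harmonic_eq_sum_Icc] at h
    push_cast at h
    exact h
  have hfact : ∀ C : ℕ, (((∑ g ∈ A, C / g : ℕ)) : ℝ) ≤ C * (1 + Real.log lam) := by
    intro C
    push_cast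
    calc (∑ g ∈ A, ((C / g : ℕ) : ℝ)) ≤ ∑ g ∈ A, (C : ℝ) / g :=
          Finset.sum_le_sum fun g _ => Nat.cast_div_le
      _ = (C : ℝ) * ∑ g ∈ A, ((g:ℝ))⁻¹ := by
          rw [Finset.mul_sum]; exact Finset.sum_congr rfl fun g _ => (div_eq_mul_inv _ _)
      _ ≤ (C : ℝ) * (1 + Real.log lam) := by
          apply mul_le_mul_of_nonneg_left hharm (by positivity)
  have hSigR : (Sig.card : ℝ) ≤ (lam * N : ℝ) * (1 + Real.log lam) ^ 2 := by
    calc (Sig.card : ℝ) ≤ (G.card : ℝ) := Nat.cast_le.2 hinj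
      _ = ((∑ g ∈ A, lam / g : ℕ) : ℝ) * ((∑ b ∈ A, N / b : ℕ) : ℝ) := by
          rw [hGcard]; push_cast; ring
      _ ≤ (lam * (1 + Real.log lam)) * (N * (1 + Real.log lam)) := by
          apply mul_le_mul (hfact lam) (hfact N) (by positivity) (by positivity)
      _ = (lam * N : ℝ) * (1 + Real.log lam) ^ 2 := by ring
  -- Cauchy–Schwarz
  have hCS : ((lam : ℝ) * N) ^ 2 ≤ (P.card : ℝ) * (Sig.card : ℝ) := by
    have h := sq_sum_le_card_mul_sum_sq (s := P) (f := fun n => ((F n).card : ℝ))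
    have h1 : (∑ n ∈ P, ((F n).card : ℝ)) = (lam : ℝ) * N := by
      rw [← Nat.cast_sum, ← hsum, hTcard]; push_cast; ring
    have h2 : (∑ n ∈ P, ((F n).card : ℝ) ^ 2) = (Sig.card : ℝ) := by
      rw [hSigcard]; push_cast; ring
    rw [h1, h2] at h
    exact h
  -- conclude
  have hlamN : (0:ℝ) < (lam : ℝ) * N := by
    have : (0:ℝ) < (lam:ℝ) := by exact_mod_cast hlam
    have : (0:ℝ) < (N:ℝ) := by exact_mod_cast hN
    positivity
  have hL : (0:ℝ) < (1 + Real.log lam) ^ 2 := by positivity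
  rw [div_le_iff₀ hL]
  have key : (lam : ℝ) * N * ((lam:ℝ) * N) ≤ ((P.card : ℝ) * (1 + Real.log lam) ^ 2) * ((lam:ℝ) * N) := by
    calc (lam : ℝ) * N * ((lam:ℝ) * N) = ((lam:ℝ) * N) ^ 2 := by ring
      _ ≤ (P.card : ℝ) * (Sig.card : ℝ) := hCS
      _ ≤ (P.card : ℝ) * ((lam * N : ℝ) * (1 + Real.log lam) ^ 2) := by
          apply mul_le_mul_of_nonneg_left hSigR (by positivity)
      _ = ((P.card : ℝ) * (1 + Real.log lam) ^ 2) * ((lam:ℝ) * N) := by ring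
  exact le_of_mul_le_mul_right key hlamN

/-- The product set `M·S = {m·s mod q : m ∈ {-mu,…,lam}\{0}, s ∈ S}` as a finset of `ZMod q`. -/
noncomputable def prodSet (q lam mu : ℕ) (S : Finset (ZMod q)) : Finset (ZMod q) :=
  (((Finset.Icc (-(mu : ℤ)) (lam : ℤ)).erase 0) ×ˢ S).image
    (fun p => (p.1 : ZMod q) * p.2)

/-- `ν_{lam,mu}(q, r)`: the maximal size of `M·S` over subsets `S ⊆ Z_q` of cardinality `r`. -/
noncomputable def nu (q lam mu r : ℕ) : ℕ :=
  sSup {n | ∃ S : Finset (ZMod q), S.card = r ∧ (prodSet q lam mu S).card = n}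

theorem stmt18 : ∃ c : ℝ, c > 0 ∧ ∀ q lam mu N : ℕ, 3 ≤ q → mu ≤ lam → 1 ≤ lam →
    1 ≤ N → N * lam < q →
    c * ((lam : ℝ) + (mu : ℝ)) * (N : ℝ) / Real.log q ^ 3 ≤ (nu q lam mu N : ℝ) := by
  classical
  refine ⟨1/8, by norm_num, ?_⟩
  intro q lam mu N hq hmu hlam hN hNq
  haveI : NeZero q := ⟨by omega⟩
  obtain ⟨P, hPmem, hPcard⟩ := main_count lam N hlam hN
  have hPlt : ∀ n ∈ P, n < q := by
    intro n hn
    obtain ⟨m, s, hm1, hm2, hs1, hs2, rfl⟩ := hPmem n hn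
    calc m * s ≤ lam * N := Nat.mul_le_mul hm2 hs2
      _ = N * lam := Nat.mul_comm _ _
      _ < q := hNq
  have hNlt : N < q := by
    calc N = N * 1 := (Nat.mul_one N).symm
      _ ≤ N * lam := Nat.mul_le_mul_left N hlam
      _ < q := hNq
  have hlamlt : lam < q := by
    calc lam = 1 * lam := (Nat.one_mul lam).symm
      _ ≤ N * lam := Nat.mul_le_mul_right lam hN
      _ < q := hNq
  have hcastinj : ∀ a b : ℕ, a < q → b < q → (a : ZMod q) = (b : ZMod q) → a = b := by
    intro a b ha hb h
    have := congrArg ZMod.val h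
    rwa [ZMod.val_natCast_of_lt ha, ZMod.val_natCast_of_lt hb] at this
  set S : Finset (ZMod q) := (Finset.Icc 1 N).image (fun i : ℕ => (i : ZMod q)) with hS
  have hScard : S.card = N := by
    rw [hS, Finset.card_image_of_injOn, Nat.card_Icc]
    · omega
    · intro a ha b hb h
      have ha' := Finset.mem_Icc.1 ha
      have hb' := Finset.mem_Icc.1 hb
      exact hcastinj a b (lt_of_le_of_lt ha'.2 hNlt) (lt_of_le_of_lt hb'.2 hNlt) h
  have hsub : P.image (fun n : ℕ => (n : ZMod q)) ⊆ prodSet q lam mu S := by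
    intro x hx
    obtain ⟨n, hn, rfl⟩ := Finset.mem_image.1 hx
    obtain ⟨m, s, hm1, hm2, hs1, hs2, rfl⟩ := hPmem n hn
    rw [prodSet, Finset.mem_image]
    refine ⟨((m : ℤ), ((s : ℕ) : ZMod q)), ?_, ?_⟩
    · rw [Finset.mem_product]
      constructor
      · rw [Finset.mem_erase]
        constructor
        · show (m : ℤ) ≠ 0
          have : m ≠ 0 := by omega
          exact_mod_cast this
        · rw [Finset.mem_Icc]
          constructor
          · show -(mu : ℤ) ≤ (m : ℤ)
            calc -(mu : ℤ) ≤ 0 := neg_nonpos.2 (Int.natCast_nonneg mu)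
              _ ≤ (m : ℤ) := Int.natCast_nonneg m
          · show (m : ℤ) ≤ (lam : ℤ)
            exact_mod_cast hm2
      · exact Finset.mem_image.2 ⟨s, Finset.mem_Icc.2 ⟨hs1, hs2⟩, rfl⟩
    · push_cast
      ring
  have himgcard : (P.image (fun n : ℕ => (n : ZMod q))).card = P.card := by
    apply Finset.card_image_of_injOn
    intro a ha b hb h
    exact hcastinj a b (hPlt a ha) (hPlt b hb) h
  have hcard_le : (P.card : ℝ) ≤ ((prodSet q lam mu S).card : ℝ) := by
    have := Finset.card_le_card hsub
    rw [himgcard] at this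
    exact_mod_cast this
  have hnu : ((prodSet q lam mu S).card : ℝ) ≤ (nu q lam mu N : ℝ) := by
    have : (prodSet q lam mu S).card ≤ nu q lam mu N := by
      apply le_csSup
      · exact ⟨Fintype.card (ZMod q), fun n hn => by
          obtain ⟨S', _, rfl⟩ := hn
          exact Finset.card_le_univ _⟩
      · exact ⟨S, hScard, rfl⟩
    exact_mod_cast this
  -- numeric part
  have hq3 : (3 : ℝ) ≤ (q : ℝ) := by exact_mod_cast hq
  have hlogq : 1 ≤ Real.log q := by
    rw [Real.le_log_iff_exp_le (by linarith)]
    calc Real.exp 1 ≤ 2.7182818286 := (Real.exp_one_lt_d9).le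
      _ ≤ 3 := by norm_num
      _ ≤ (q : ℝ) := hq3
  have hll : (0:ℝ) ≤ Real.log lam := Real.log_natCast_nonneg lam
  have hloglam : Real.log lam ≤ Real.log q := by
    apply Real.log_le_log (by exact_mod_cast hlam)
    exact_mod_cast hlamlt.le
  have hmuR : (mu : ℝ) ≤ (lam : ℝ) := by exact_mod_cast hmu
  have h1 : (1/8 : ℝ) * ((lam : ℝ) + mu) * N / Real.log q ^ 3 ≤
      (lam : ℝ) * N / (1 + Real.log lam) ^ 2 := by
    have hNpos : (0:ℝ) < (N : ℝ) := by exact_mod_cast hN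
    have hlampos : (0:ℝ) < (lam : ℝ) := by exact_mod_cast hlam
    rw [div_le_div_iff₀ (by positivity) (by positivity)]
    have hB : (1 + Real.log lam) ^ 2 ≤ 4 * Real.log q ^ 3 := by
      have h2 : 1 + Real.log lam ≤ 2 * Real.log q := by linarith
      have h3 : (1 + Real.log lam) ^ 2 ≤ (2 * Real.log q) ^ 2 := by
        apply pow_le_pow_left₀ (by linarith) h2
      have h4 : Real.log q ^ 2 ≤ Real.log q ^ 3 := by
        calc Real.log q ^ 2 = Real.log q ^ 2 * 1 := by ring
          _ ≤ Real.log q ^ 2 * Real.log q := by nlinarith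
          _ = Real.log q ^ 3 := by ring
      nlinarith
    have hmu2 : (lam : ℝ) + mu ≤ 2 * lam := by linarith
    have e1 : (lam:ℝ)*(N:ℝ)*((1+Real.log lam)^2) ≤ (lam:ℝ)*(N:ℝ)*(4*Real.log q^3) :=
      mul_le_mul_of_nonneg_left hB (by positivity)
    have e2 : ((lam:ℝ)+(mu:ℝ))*((N:ℝ)*(1+Real.log lam)^2) ≤
        (2*(lam:ℝ))*((N:ℝ)*(1+Real.log lam)^2) :=
      mul_le_mul_of_nonneg_right hmu2 (by positivity)
    nlinarith [e1, e2]
  calc (1/8 : ℝ) * ((lam : ℝ) + mu) * N / Real.log q ^ 3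
      ≤ (lam : ℝ) * N / (1 + Real.log lam) ^ 2 := h1
    _ ≤ (P.card : ℝ) := hPcard
    _ ≤ ((prodSet q lam mu S).card : ℝ) := hcard_le
    _ ≤ (nu q lam mu N : ℝ) := hnu
end

section
/- There exists an absolute constant c > 0 such that for all integers q ≥ 3, all non-negative integers λ ≥ μ with 1 ≤ λ < q, and all positive integers N ≤ q with N·λ ≥ q, one has ν_{λ,μ}(q,N) ≥ c·q·(log q)^{−3}. -/
private lemma castInjOn (q : ℕ) (hq : 0 < q) :
    Set.InjOn (fun n : ℕ => (n : ZMod q)) (Finset.Icc 1 q) := by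
  intro a ha b hb h
  simp only [Finset.coe_Icc, Set.mem_Icc] at ha hb
  haveI : NeZero q := ⟨hq.ne'⟩
  have h2 : a % q = b % q := by
    have := congrArg ZMod.val h
    simpa only [ZMod.val_natCast] using this
  rcases eq_or_lt_of_le ha.2 with rfl | ha2
  · rcases eq_or_lt_of_le hb.2 with rfl | hb2
    · rfl
    · rw [Nat.mod_self, Nat.mod_eq_of_lt hb2] at h2; omega
  · rcases eq_or_lt_of_le hb.2 with rfl | hb2
    · rw [Nat.mod_self, Nat.mod_eq_of_lt ha2] at h2; omega
    · rwa [Nat.mod_eq_of_lt ha2, Nat.mod_eq_of_lt hb2] at h2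

private lemma sum_inv_le (q : ℕ) : ∑ k ∈ Finset.Icc 1 q, (k : ℝ)⁻¹ ≤ 1 + Real.log q := by
  have h := harmonic_le_one_add_log q
  have h2 : ((harmonic q : ℚ) : ℝ) = ∑ k ∈ Finset.Icc 1 q, (k : ℝ)⁻¹ := by
    rw [harmonic_eq_sum_Icc]; push_cast; rfl
  linarith

private lemma sum_inv_nonneg (q : ℕ) : (0:ℝ) ≤ ∑ k ∈ Finset.Icc 1 q, (k : ℝ)⁻¹ :=
  Finset.sum_nonneg fun k _ => by positivity

private lemma Tcard (q : ℕ) (hq : 1 ≤ q) :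
    (((((Finset.Icc 1 q) ×ˢ (Finset.Icc 1 q) ×ˢ (Finset.Icc 1 q)) ×ˢ (Finset.Icc 1 q)).filter
      (fun x => x.1.1 * x.1.2.1 * x.1.2.2 * x.2 ≤ q)).card : ℝ)
      ≤ q * (1 + Real.log q) ^ 3 := by
  classical
  set I := Finset.Icc 1 q with hI
  set tr := I ×ˢ I ×ˢ I with htr
  set T := ((tr ×ˢ I).filter (fun x => x.1.1 * x.1.2.1 * x.1.2.2 * x.2 ≤ q)) with hT
  have hfib : T.card = ∑ x ∈ tr, (T.filter (fun p => p.1 = x)).card := by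
    apply Finset.card_eq_sum_card_fiberwise
    intro p hp
    rw [hT, Finset.mem_coe, Finset.mem_filter, Finset.mem_product] at hp
    exact hp.1.1
  have hfb : ∀ x ∈ tr, (T.filter (fun p => p.1 = x)).card ≤ q / (x.1 * x.2.1 * x.2.2) := by
    intro x hx
    rw [htr, Finset.mem_product, Finset.mem_product] at hx
    have hx1 : 1 ≤ x.1 := (Finset.mem_Icc.mp hx.1).1
    have hx21 : 1 ≤ x.2.1 := (Finset.mem_Icc.mp hx.2.1).1
    have hx22 : 1 ≤ x.2.2 := (Finset.mem_Icc.mp hx.2.2).1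
    have hpos : 0 < x.1 * x.2.1 * x.2.2 := by positivity
    have : (T.filter (fun p => p.1 = x)).card ≤ (Finset.Icc 1 (q / (x.1 * x.2.1 * x.2.2))).card := by
      apply Finset.card_le_card_of_injOn (fun p => p.2)
      · intro p hp
        rw [Finset.mem_coe, Finset.mem_filter, hT, Finset.mem_filter, Finset.mem_product] at hp
        obtain ⟨⟨⟨_, hp2⟩, hple⟩, hpx⟩ := hp
        rw [Finset.mem_coe, Finset.mem_Icc]
        refine ⟨(Finset.mem_Icc.mp hp2).1, ?_⟩
        rw [Nat.le_div_iff_mul_le hpos, mul_comm]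
        rw [hpx] at hple
        exact hple
      · intro p hp p' hp' hpp
        simp only [Finset.mem_coe, Finset.mem_filter] at hp hp'
        exact Prod.ext (hp.2.trans hp'.2.symm) hpp
    rwa [Nat.card_Icc, Nat.add_sub_cancel] at this
  have step1 : (T.card : ℝ) ≤ ∑ x ∈ tr, ((q / (x.1 * x.2.1 * x.2.2) : ℕ) : ℝ) := by
    rw [hfib]; push_cast
    exact Finset.sum_le_sum (fun x hx => by exact_mod_cast hfb x hx)
  have step2 : ∑ x ∈ tr, ((q / (x.1 * x.2.1 * x.2.2) : ℕ) : ℝ) ≤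
      ∑ x ∈ tr, (q : ℝ) * (x.1 : ℝ)⁻¹ * (x.2.1 : ℝ)⁻¹ * (x.2.2 : ℝ)⁻¹ := by
    apply Finset.sum_le_sum
    intro x hx
    have := Nat.cast_div_le (α := ℝ) (m := q) (n := x.1 * x.2.1 * x.2.2)
    calc ((q / (x.1 * x.2.1 * x.2.2) : ℕ) : ℝ) ≤ (q : ℝ) / ((x.1 * x.2.1 * x.2.2 : ℕ) : ℝ) := this
      _ = (q : ℝ) * (x.1 : ℝ)⁻¹ * (x.2.1 : ℝ)⁻¹ * (x.2.2 : ℝ)⁻¹ := by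
          push_cast; rw [div_eq_mul_inv, mul_inv, mul_inv]; ring
  have step3 : ∑ x ∈ tr, (q : ℝ) * (x.1 : ℝ)⁻¹ * (x.2.1 : ℝ)⁻¹ * (x.2.2 : ℝ)⁻¹ =
      (q : ℝ) * (∑ k ∈ I, (k : ℝ)⁻¹) ^ 3 := by
    rw [htr, Finset.sum_product]
    simp only [Finset.sum_product]
    trans ∑ g ∈ I, (g:ℝ)⁻¹ * ∑ a ∈ I, (a:ℝ)⁻¹ * ∑ b ∈ I, (q:ℝ) * (b:ℝ)⁻¹
    · simp only [Finset.mul_sum]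
      apply Finset.sum_congr rfl; intro g _
      apply Finset.sum_congr rfl; intro a _
      apply Finset.sum_congr rfl; intro b _
      ring
    · rw [← Finset.mul_sum, ← Finset.sum_mul, ← Finset.sum_mul]; ring
  have hH := sum_inv_le q
  have hH0 := sum_inv_nonneg q
  have hq0 : (0:ℝ) ≤ q := by positivity
  calc (T.card : ℝ) ≤ (q : ℝ) * (∑ k ∈ I, (k : ℝ)⁻¹) ^ 3 := by
        rw [← step3]; exact step1.trans step2
    _ ≤ q * (1 + Real.log q) ^ 3 := by
        apply mul_le_mul_of_nonneg_left _ hq0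
        exact pow_le_pow_left₀ hH0 hH 3


private lemma cs_bound (A : Finset (ℕ × ℕ)) :
    ((A.card : ℝ)) ^ 2 ≤ ((A.image (fun p => p.1 * p.2)).card : ℝ) *
      (((A ×ˢ A).filter (fun p => p.1.1 * p.1.2 = p.2.1 * p.2.2)).card : ℝ) := by
  classical
  set D := A.image (fun p => p.1 * p.2) with hD
  set r : ℕ → ℕ := fun n => (A.filter (fun p => p.1 * p.2 = n)).card with hr
  have h1 : A.card = ∑ n ∈ D, r n := by
    apply Finset.card_eq_sum_card_fiberwise
    intro p hp
    exact Finset.mem_image_of_mem _ hp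
  set Q := ((A ×ˢ A).filter (fun p => p.1.1 * p.1.2 = p.2.1 * p.2.2)) with hQ
  have h2 : Q.card = ∑ n ∈ D, r n * r n := by
    have := Finset.card_eq_sum_card_fiberwise
      (f := fun p : (ℕ × ℕ) × (ℕ × ℕ) => p.1.1 * p.1.2) (s := Q) (t := D) ?_
    · rw [this]
      apply Finset.sum_congr rfl
      intro n _
      have he : Q.filter (fun p => p.1.1 * p.1.2 = n) =
          (A.filter (fun p => p.1 * p.2 = n)) ×ˢ (A.filter (fun p => p.1 * p.2 = n)) := by
        ext p
        simp only [hQ, Finset.mem_filter, Finset.mem_product]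
        constructor
        · rintro ⟨⟨⟨h1', h2'⟩, h3⟩, h4⟩
          exact ⟨⟨h1', h4⟩, ⟨h2', h3 ▸ h4⟩⟩
        · rintro ⟨⟨h1', h2'⟩, ⟨h3, h4⟩⟩
          exact ⟨⟨⟨h1', h3⟩, h2'.trans h4.symm⟩, h2'⟩
      rw [he, Finset.card_product]
    · intro p hp
      rw [hQ, Finset.mem_coe, Finset.mem_filter, Finset.mem_product] at hp
      exact Finset.mem_image_of_mem _ hp.1.1
  have hcs := sq_sum_le_card_mul_sum_sq (s := D) (f := fun n => (r n : ℝ))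
  have e1 : (A.card : ℝ) = ∑ n ∈ D, (r n : ℝ) := by rw [h1]; push_cast; rfl
  have e2 : (Q.card : ℝ) = ∑ n ∈ D, (r n : ℝ) ^ 2 := by
    rw [h2]; push_cast; apply Finset.sum_congr rfl; intros; ring
  rw [e1, e2]
  exact hcs

private lemma energy_le (q m₀ N : ℕ) (hm₀q : m₀ ≤ q) (hNq : N ≤ q) (hm₀N : m₀ * N ≤ q) :
    ((((Finset.Icc 1 m₀ ×ˢ Finset.Icc 1 N) ×ˢ (Finset.Icc 1 m₀ ×ˢ Finset.Icc 1 N)).filter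
        (fun p => p.1.1 * p.1.2 = p.2.1 * p.2.2)).card) ≤
    ((((Finset.Icc 1 q) ×ˢ (Finset.Icc 1 q) ×ˢ (Finset.Icc 1 q)) ×ˢ (Finset.Icc 1 q)).filter
      (fun x => x.1.1 * x.1.2.1 * x.1.2.2 * x.2 ≤ q)).card := by
  classical
  set Q := ((Finset.Icc 1 m₀ ×ˢ Finset.Icc 1 N) ×ˢ (Finset.Icc 1 m₀ ×ˢ Finset.Icc 1 N)).filter
      (fun p => p.1.1 * p.1.2 = p.2.1 * p.2.2) with hQ
  set φ : (ℕ × ℕ) × (ℕ × ℕ) → (ℕ × ℕ × ℕ) × ℕ := fun p =>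
    ((Nat.gcd p.1.1 p.2.1, p.1.1 / Nat.gcd p.1.1 p.2.1, p.2.1 / Nat.gcd p.1.1 p.2.1),
      p.1.2 / (p.2.1 / Nat.gcd p.1.1 p.2.1)) with hφ
  have key : ∀ p ∈ Q,
      (φ p ∈ (((Finset.Icc 1 q) ×ˢ (Finset.Icc 1 q) ×ˢ (Finset.Icc 1 q)) ×ˢ (Finset.Icc 1 q)).filter
        (fun x => x.1.1 * x.1.2.1 * x.1.2.2 * x.2 ≤ q)) ∧
      p = (((φ p).1.1 * (φ p).1.2.1, (φ p).1.2.2 * (φ p).2),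
           ((φ p).1.1 * (φ p).1.2.2, (φ p).1.2.1 * (φ p).2)) := by
    intro p hp
    rw [hQ, Finset.mem_filter, Finset.mem_product] at hp
    obtain ⟨⟨hp1, hp2⟩, heq⟩ := hp
    rw [Finset.mem_product, Finset.mem_Icc, Finset.mem_Icc] at hp1 hp2
    obtain ⟨⟨hm1, hm2⟩, ⟨hs1, hs2⟩⟩ := hp1
    obtain ⟨⟨hm1', hm2'⟩, ⟨hs1', hs2'⟩⟩ := hp2
    set m := p.1.1; set s := p.1.2; set m' := p.2.1; set s' := p.2.2
    set g := Nat.gcd m m' with hg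
    have hgpos : 0 < g := Nat.gcd_pos_of_pos_left _ hm1
    set a := m / g with ha
    set b := m' / g with hb
    have hga : g * a = m := Nat.mul_div_cancel' (Nat.gcd_dvd_left m m')
    have hgb : g * b = m' := Nat.mul_div_cancel' (Nat.gcd_dvd_right m m')
    have hapos : 0 < a := by
      rcases Nat.eq_zero_or_pos a with h | h
      · rw [h, mul_zero] at hga; omega
      · exact h
    have hbpos : 0 < b := by
      rcases Nat.eq_zero_or_pos b with h | h
      · rw [h, mul_zero] at hgb; omega
      · exact h
    have cop : Nat.Coprime a b := Nat.coprime_div_gcd_div_gcd hgpos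
    have hab : a * s = b * s' := by
      apply Nat.eq_of_mul_eq_mul_left hgpos
      rw [← mul_assoc, ← mul_assoc, hga, hgb]
      exact heq
    have hbs : b ∣ s := by
      have : b ∣ a * s := ⟨s', hab⟩
      exact (Nat.Coprime.dvd_of_dvd_mul_left cop.symm this)
    set t := s / b with ht
    have hbt : b * t = s := Nat.mul_div_cancel' hbs
    have htpos : 0 < t := by
      rcases Nat.eq_zero_or_pos t with h | h
      · rw [h, mul_zero] at hbt; omega
      · exact h
    have hs'at : s' = a * t := by
      apply Nat.eq_of_mul_eq_mul_left hbpos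
      rw [← hab, ← hbt]; ring
    have hprod : g * a * b * t ≤ q := by
      calc g * a * b * t = (g * a) * (b * t) := by ring
        _ = m * s := by rw [hga, hbt]
        _ ≤ m₀ * N := Nat.mul_le_mul hm2 hs2
        _ ≤ q := hm₀N
    have hgle : g ≤ q := le_trans (Nat.le_of_dvd hm1 (Nat.gcd_dvd_left m m')) (le_trans hm2 hm₀q)
    have hale : a ≤ q := le_trans (Nat.div_le_self _ _) (le_trans hm2 hm₀q)
    have hble : b ≤ q := le_trans (Nat.div_le_self _ _) (le_trans hm2' hm₀q)
    have htle : t ≤ q := le_trans (Nat.div_le_self _ _) (le_trans hs2 hNq)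
    constructor
    · rw [Finset.mem_filter, Finset.mem_product, Finset.mem_product, Finset.mem_product]
      simp only [Finset.mem_Icc]
      exact ⟨⟨⟨⟨hgpos, hgle⟩, ⟨hapos, hale⟩, ⟨hbpos, hble⟩⟩, ⟨htpos, htle⟩⟩, hprod⟩
    · have : p = ((m, s), (m', s')) := rfl
      rw [this]
      simp only [hφ]
      refine Prod.ext (Prod.ext ?_ ?_) (Prod.ext ?_ ?_) <;> simp only
      · exact hga.symm
      · exact hbt.symm
      · exact hgb.symm
      · exact hs'at
  apply Finset.card_le_card_of_injOn φ
  · intro p hp; exact (key p hp).1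
  · intro p hp p' hp' hpp
    rw [Finset.mem_coe] at hp hp'
    rw [(key p hp).2, (key p' hp').2, hpp]

theorem stmt19 : ∃ c : ℝ, c > 0 ∧ ∀ q lam mu N : ℕ, 3 ≤ q → mu ≤ lam → 1 ≤ lam →
    lam < q → 1 ≤ N → N ≤ q → q ≤ N * lam →
    c * (q : ℝ) / Real.log q ^ 3 ≤ (nu q lam mu N : ℝ) := by
  classical
  refine ⟨1/32, by norm_num, ?_⟩
  intro q lam mu N hq hmu hlam hlamq hN hNq hqNl
  haveI : NeZero q := ⟨by omega⟩
  set m₀ := min lam (q / N) with hm₀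
  have hNpos : 0 < N := hN
  have hdivpos : 0 < q / N := Nat.div_pos hNq hNpos
  have hm₀pos : 0 < m₀ := lt_min hlam hdivpos
  have hm₀lam : m₀ ≤ lam := min_le_left _ _
  have hm₀q : m₀ ≤ q := le_trans hm₀lam (le_of_lt hlamq)
  have hm₀N : m₀ * N ≤ q := by
    calc m₀ * N ≤ (q / N) * N := Nat.mul_le_mul_right _ (min_le_right _ _)
      _ ≤ q := Nat.div_mul_le_self q N
  have h2mN : q ≤ 2 * (m₀ * N) := by
    rcases le_or_gt lam (q / N) with h | h
    · have he : m₀ = lam := min_eq_left h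
      rw [he]
      calc q ≤ N * lam := hqNl
        _ = lam * N := Nat.mul_comm _ _
        _ ≤ 2 * (lam * N) := Nat.le_mul_of_pos_left _ (by norm_num)
    · have he : m₀ = q / N := min_eq_right h.le
      have hd := Nat.div_add_mod q N
      have hm := Nat.mod_lt q hNpos
      have h1 : 1 ≤ q / N := hdivpos
      rw [he]
      nlinarith [hd, hm, h1]
  set A := (Finset.Icc 1 m₀) ×ˢ (Finset.Icc 1 N) with hA
  have hAcard : A.card = m₀ * N := by
    rw [hA, Finset.card_product, Nat.card_Icc, Nat.card_Icc, Nat.add_sub_cancel,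
      Nat.add_sub_cancel]
  set D := A.image (fun p => p.1 * p.2) with hD
  have hDsub : ↑D ⊆ (↑(Finset.Icc 1 q) : Set ℕ) := by
    intro n hn
    simp only [hD, Finset.coe_image, Set.mem_image, Finset.mem_coe, hA, Finset.mem_product,
      Finset.mem_Icc] at hn
    obtain ⟨⟨m, s⟩, ⟨⟨hm1, hm2⟩, hs1, hs2⟩, rfl⟩ := hn
    simp only [Finset.coe_Icc, Set.mem_Icc]
    exact ⟨Nat.one_le_iff_ne_zero.mpr (by positivity),
      le_trans (Nat.mul_le_mul hm2 hs2) hm₀N⟩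
  set S := (Finset.Icc 1 N).image (fun n : ℕ => (n : ZMod q)) with hS
  have hinj := castInjOn q (by omega)
  have hSsub : (↑(Finset.Icc 1 N) : Set ℕ) ⊆ ↑(Finset.Icc 1 q) := by
    intro x hx
    simp only [Finset.coe_Icc, Set.mem_Icc] at hx ⊢
    omega
  have hScard : S.card = N := by
    rw [hS, Finset.card_image_of_injOn (hinj.mono hSsub), Nat.card_Icc]
    omega
  have hDP : D.card ≤ (prodSet q lam mu S).card := by
    have h1 : D.image (fun n : ℕ => (n : ZMod q)) ⊆ prodSet q lam mu S := by
      intro x hx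
      simp only [Finset.mem_image] at hx
      obtain ⟨n, hn, rfl⟩ := hx
      simp only [hD, Finset.mem_image, hA, Finset.mem_product, Finset.mem_Icc] at hn
      obtain ⟨⟨m, s⟩, ⟨⟨hm1, hm2⟩, hs1, hs2⟩, rfl⟩ := hn
      rw [prodSet, Finset.mem_image]
      refine ⟨((m : ℤ), ((s : ℕ) : ZMod q)), ?_, ?_⟩
      · rw [Finset.mem_product, Finset.mem_erase, Finset.mem_Icc]
        refine ⟨⟨by positivity, ?_, ?_⟩, ?_⟩
        · omega
        · show ((m : ℤ)) ≤ (lam : ℤ)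
          exact_mod_cast le_trans hm2 hm₀lam
        · rw [hS, Finset.mem_image]
          exact ⟨s, Finset.mem_Icc.mpr ⟨hs1, hs2⟩, rfl⟩
      · push_cast
        ring
    calc D.card = (D.image (fun n : ℕ => (n : ZMod q))).card :=
          (Finset.card_image_of_injOn (hinj.mono hDsub)).symm
      _ ≤ _ := Finset.card_le_card h1
  have hnu : (prodSet q lam mu S).card ≤ nu q lam mu N := by
    apply le_csSup
    · refine ⟨Fintype.card (ZMod q), ?_⟩
      rintro n ⟨S', _, rfl⟩
      exact Finset.card_le_univ _
    · exact ⟨S, hScard, rfl⟩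
  have hL : (1 : ℝ) ≤ Real.log q := by
    rw [Real.le_log_iff_exp_le (by exact_mod_cast Nat.lt_of_lt_of_le (by norm_num) hq)]
    calc Real.exp 1 ≤ 2.7182818286 := Real.exp_one_lt_d9.le
      _ ≤ 3 := by norm_num
      _ ≤ q := by exact_mod_cast hq
  have hcs := cs_bound A
  have hen := energy_le q m₀ N hm₀q hNq hm₀N
  have hT := Tcard q (by omega)
  have hQle : ((((A ×ˢ A).filter (fun p => p.1.1 * p.1.2 = p.2.1 * p.2.2)).card : ℝ)) ≤
      (q : ℝ) * (1 + Real.log q) ^ 3 := by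
    refine le_trans ?_ hT
    exact_mod_cast hen
  have hDnonneg : (0 : ℝ) ≤ (D.card : ℝ) := Nat.cast_nonneg _
  have hqR : (3 : ℝ) ≤ (q : ℝ) := by exact_mod_cast hq
  have e1 : (q : ℝ) ≤ 2 * (A.card : ℝ) := by
    rw [hAcard]
    exact_mod_cast h2mN
  have hL0 : (0 : ℝ) < Real.log q := lt_of_lt_of_le one_pos hL
  have e3 : (1 + Real.log q) ^ 3 ≤ 8 * Real.log q ^ 3 := by
    nlinarith [sub_nonneg.mpr hL,
      mul_nonneg (mul_nonneg (sub_nonneg.mpr hL) hL0.le) hL0.le,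
      mul_nonneg (sub_nonneg.mpr hL) hL0.le]
  have hCount : (q : ℝ) ^ 2 ≤ 32 * (D.card : ℝ) * q * Real.log q ^ 3 := by
    have c1 : (q : ℝ) ^ 2 ≤ 4 * (A.card : ℝ) ^ 2 := by nlinarith [e1, Nat.cast_nonneg (α := ℝ) A.card]
    have c2 : (A.card : ℝ) ^ 2 ≤ (D.card : ℝ) * ((q : ℝ) * (1 + Real.log q) ^ 3) :=
      le_trans hcs (by
        apply mul_le_mul_of_nonneg_left hQle hDnonneg)
    have c3 : (D.card : ℝ) * ((q : ℝ) * (1 + Real.log q) ^ 3) ≤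
        (D.card : ℝ) * ((q : ℝ) * (8 * Real.log q ^ 3)) := by
      apply mul_le_mul_of_nonneg_left _ hDnonneg
      apply mul_le_mul_of_nonneg_left e3 (by linarith)
    linarith [c1, c2, c3]
  have hL3 : (0 : ℝ) < Real.log q ^ 3 := by positivity
  rw [div_le_iff₀ hL3]
  have hqpos : (0 : ℝ) < q := by linarith
  have hfin : (q : ℝ) ≤ 32 * (D.card : ℝ) * Real.log q ^ 3 := by
    refine le_of_mul_le_mul_right ?_ hqpos
    calc (q : ℝ) * q = (q : ℝ) ^ 2 := by ring
      _ ≤ 32 * (D.card : ℝ) * q * Real.log q ^ 3 := hCount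
      _ = 32 * (D.card : ℝ) * Real.log q ^ 3 * q := by ring
  have hmono : (D.card : ℝ) ≤ (nu q lam mu N : ℝ) := by
    exact_mod_cast le_trans hDP hnu
  calc (1 / 32 : ℝ) * q ≤ (D.card : ℝ) * Real.log q ^ 3 := by linarith
    _ ≤ (nu q lam mu N : ℝ) * Real.log q ^ 3 := by
        apply mul_le_mul_of_nonneg_right hmono (le_of_lt hL3)
end
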